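/- (First-column lemma) Let G be a δ-dense finite simple graph with nested solutions, with vertex set identified with {0,…,|V|−1} via an optimal order, and let A_1 ⊆ A_2 ⊆ ⋯ ⊆ A_{|V|²} be a chain of compressed subsets of V × V with |A_i| = i and I_{G²}(A_i) = I_{G²}(i) for every i. If A_2 = {(0,0), (0,1)}, then A_{|V|} = {(0,0), (0,1), …, (0, |V|−1)}. -/

import Mathlib

open Finset
open scoped Classical

/-- Number of edges of `G` with both endpoints in `A`. -/
noncomputable def edgesIn {V : Type*} [Fintype V] (G : SimpleGraph V) (A : Finset V) : ℕ :=
  (G.edgeFinset.filter (fun e => ∀ v ∈ e, v ∈ A)).card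

/-- `I_G(m)`: maximum number of induced edges over all `m`-subsets. -/
noncomputable def maxEdgesIn {V : Type*} [Fintype V] (G : SimpleGraph V) (m : ℕ) : ℕ :=
  (Finset.univ.powersetCard m).sup (edgesIn G)

/-- The `δ`-sequence of `G`. -/
noncomputable def deltaSeq {V : Type*} [Fintype V] (G : SimpleGraph V) (m : ℕ) : ℤ :=
  (maxEdgesIn G m : ℤ) - (maxEdgesIn G (m - 1) : ℤ)

/-- `G` has nested solutions. -/
def hasNS {V : Type*} [Fintype V] (G : SimpleGraph V) : Prop :=
  ∃ A : ℕ → Finset V,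
    (∀ i, 1 ≤ i → i < Fintype.card V → A i ⊆ A (i + 1)) ∧
    (∀ i, 1 ≤ i → i ≤ Fintype.card V →
      (A i).card = i ∧ edgesIn G (A i) = maxEdgesIn G i)

/-- `G` is `δ`-dense. -/
def deltaDense {V : Type*} [Fintype V] (G : SimpleGraph V) : Prop :=
  ∀ i, 2 ≤ i → i ≤ Fintype.card V → deltaSeq G i ≤ deltaSeq G (i - 1) → 2 ≤ deltaSeq G i

/-- The `d`-th cartesian power of `G`. -/
def cartPower {V : Type*} (G : SimpleGraph V) (d : ℕ) : SimpleGraph (Fin d → V) where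
  Adj x y := ∃ i, G.Adj (x i) (y i) ∧ ∀ j, j ≠ i → x j = y j
  symm := by
    constructor
    rintro x y ⟨i, h, hj⟩
    exact ⟨i, h.symm, fun j hje => (hj j hje).symm⟩
  loopless := by
    constructor
    rintro x ⟨i, h, -⟩
    exact G.loopless.irrefl _ h

/-- The initial segment `{0, …, k-1}` of `Fin N`. -/
def finSeg (N k : ℕ) : Finset (Fin N) :=
  Finset.univ.filter (fun v => (v : ℕ) < k)

/-- The set of the first `m` elements under a (strict total) order `r`. -/
noncomputable def initSeg {α : Type*} [Fintype α] (r : α → α → Prop) (m : ℕ) : Finset α :=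
  Finset.univ.filter (fun u => (Finset.univ.filter (fun w => r w u)).card < m)

/-- Strict lexicographic order on tuples. -/
def lexLt {n N : ℕ} (x y : Fin n → Fin N) : Prop :=
  ∃ i, (∀ j, j < i → x j = y j) ∧ x i < y i

/-- Strict colexicographic order on tuples. -/
def colexLt {n N : ℕ} (x y : Fin n → Fin N) : Prop :=
  ∃ i, (∀ j, i < j → x j = y j) ∧ x i < y i

/-- Strict lexicographic order on pairs. -/
def lexPair {N : ℕ} (p q : Fin N × Fin N) : Prop :=
  p.1 < q.1 ∨ (p.1 = q.1 ∧ p.2 < q.2)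

/-- Strict colexicographic order on pairs. -/
def colexPair {N : ℕ} (p q : Fin N × Fin N) : Prop :=
  p.2 < q.2 ∨ (p.2 = q.2 ∧ p.1 < q.1)

/-- A subset of `Fin M × Fin N` is compressed. -/
def IsCompressed {M N : ℕ} (A : Finset (Fin M × Fin N)) : Prop :=
  (∀ a : Fin M, ∀ y y' : Fin N, (a, y) ∈ A → y' ≤ y → (a, y') ∈ A) ∧
  (∀ b : Fin N, ∀ x x' : Fin M, (x, b) ∈ A → x' ≤ x → (x', b) ∈ A)

/-- Number of boundary edges: edges with exactly one endpoint in `A`. -/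
noncomputable def edgesBd {V : Type*} [Fintype V] (G : SimpleGraph V) (A : Finset V) : ℕ :=
  (G.edgeFinset.filter (fun e => ∃ u ∈ e, ∃ v ∈ e, u ∈ A ∧ v ∉ A)).card

lemma edgesIn_mono {V : Type*} [Fintype V] (G : SimpleGraph V) {A B : Finset V} (h : A ⊆ B) :
    edgesIn G A ≤ edgesIn G B := by
  apply Finset.card_le_card
  intro e he
  rw [Finset.mem_filter] at he ⊢
  exact ⟨he.1, fun v hv => h (he.2 v hv)⟩

lemma le_maxEdgesIn {V : Type*} [Fintype V] (G : SimpleGraph V) (A : Finset V) :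
    edgesIn G A ≤ maxEdgesIn G A.card :=
  Finset.le_sup (by simp [Finset.mem_powersetCard_univ])

lemma maxEdgesIn_mono {V : Type*} [Fintype V] (G : SimpleGraph V) {m : ℕ}
    (h : m < Fintype.card V) : maxEdgesIn G m ≤ maxEdgesIn G (m + 1) := by
  apply Finset.sup_le
  intro A hA
  rw [Finset.mem_powersetCard_univ] at hA
  obtain ⟨B, hAB, -, hB⟩ := Finset.exists_subsuperset_card_eq (n := m+1) (Finset.subset_univ A)
    (by omega) (by simpa using h)
  calc edgesIn G A ≤ edgesIn G B := edgesIn_mono G hAB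
    _ ≤ maxEdgesIn G (m+1) := hB ▸ le_maxEdgesIn G B

lemma edgesIn_eq_zero {V : Type*} [Fintype V] (G : SimpleGraph V) {A : Finset V}
    (h : A.card ≤ 1) : edgesIn G A = 0 := by
  rw [edgesIn, Finset.card_eq_zero, Finset.filter_eq_empty_iff]
  intro e he
  rw [SimpleGraph.mem_edgeFinset] at he
  induction e using Sym2.ind with
  | _ u v =>
    rw [SimpleGraph.mem_edgeSet] at he
    intro hmem
    have hu := hmem u (Sym2.mem_mk_left u v)
    have hv := hmem v (Sym2.mem_mk_right u v)
    exact G.ne_of_adj he (Finset.card_le_one.mp h u hu v hv)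

lemma edgesIn_le_one {V : Type*} [Fintype V] (G : SimpleGraph V) {A : Finset V}
    (h : A.card ≤ 2) : edgesIn G A ≤ 1 := by
  rw [edgesIn]
  apply Finset.card_le_one.mpr
  intro e he f hf
  rw [Finset.mem_filter, SimpleGraph.mem_edgeFinset] at he hf
  induction e using Sym2.ind with
  | _ u v =>
    induction f using Sym2.ind with
    | _ x y =>
      obtain ⟨he, hemem⟩ := he
      obtain ⟨hf, hfmem⟩ := hf
      rw [SimpleGraph.mem_edgeSet] at he hf
      have hu := hemem u (Sym2.mem_mk_left u v)
      have hv := hemem v (Sym2.mem_mk_right u v)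
      have hx := hfmem x (Sym2.mem_mk_left x y)
      have hy := hfmem y (Sym2.mem_mk_right x y)
      have huv : u ≠ v := G.ne_of_adj he
      have hxy : x ≠ y := G.ne_of_adj hf
      have hs : ({u, v} : Finset V) ⊆ A := by
        intro w hw; rw [Finset.mem_insert, Finset.mem_singleton] at hw
        rcases hw with rfl | rfl <;> assumption
      have hcard : ({u, v} : Finset V).card = 2 := Finset.card_pair huv
      have hAuv : A = {u, v} := (Finset.eq_of_subset_of_card_le hs (by omega)).symm
      subst hAuv
      rw [Finset.mem_insert, Finset.mem_singleton] at hx hy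
      rcases hx with rfl | rfl <;> rcases hy with rfl | rfl <;>
        first
        | exact absurd rfl hxy
        | rfl
        | exact Sym2.eq_swap

lemma maxEdgesIn_one {V : Type*} [Fintype V] (G : SimpleGraph V) : maxEdgesIn G 1 = 0 := by
  apply Nat.le_antisymm _ (Nat.zero_le _)
  apply Finset.sup_le
  intro A hA
  rw [Finset.mem_powersetCard_univ] at hA
  exact le_of_eq (edgesIn_eq_zero G (by omega))

lemma maxEdgesIn_zero {V : Type*} [Fintype V] (G : SimpleGraph V) : maxEdgesIn G 0 = 0 := by
  apply Nat.le_antisymm _ (Nat.zero_le _)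
  apply Finset.sup_le
  intro A hA
  rw [Finset.mem_powersetCard_univ] at hA
  exact le_of_eq (edgesIn_eq_zero G (by omega))

lemma maxEdgesIn_two_le {V : Type*} [Fintype V] (G : SimpleGraph V) : maxEdgesIn G 2 ≤ 1 := by
  apply Finset.sup_le
  intro A hA
  rw [Finset.mem_powersetCard_univ] at hA
  exact edgesIn_le_one G (by omega)

lemma card_finSeg {N k : ℕ} (h : k ≤ N) : (finSeg N k).card = k := by
  have : finSeg N k = Finset.map (Fin.castLEEmb h) Finset.univ := by
    ext x
    simp only [finSeg, Finset.mem_filter, Finset.mem_univ, true_and, Finset.mem_map,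
      Fin.castLEEmb_apply]
    constructor
    · intro hx; exact ⟨⟨x, hx⟩, Fin.ext rfl⟩
    · rintro ⟨y, -, rfl⟩; exact y.isLt
  rw [this, Finset.card_map, Finset.card_univ, Fintype.card_fin]

noncomputable def rowSet (N k : ℕ) : Finset (Fin N × Fin N) :=
  Finset.univ.filter (fun p => (p.1 : ℕ) = 0 ∧ (p.2 : ℕ) < k)

lemma mem_rowSet {N k : ℕ} {p : Fin N × Fin N} :
    p ∈ rowSet N k ↔ (p.1 : ℕ) = 0 ∧ (p.2 : ℕ) < k := by
  simp [rowSet]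

lemma card_rowSet {N k : ℕ} (h0 : 0 < N) (h : k ≤ N) : (rowSet N k).card = k := by
  have : rowSet N k = Finset.map ⟨fun y => ((⟨0, h0⟩ : Fin N), y), by
      have hinj : Function.Injective (fun y : Fin N => ((⟨0, h0⟩ : Fin N), y)) := by
        intro a b hab; exact (Prod.mk.injEq _ _ _ _ ▸ hab).2
      exact hinj⟩ (finSeg N k) := by
    ext p
    simp only [rowSet, Finset.mem_filter, Finset.mem_univ, true_and, Finset.mem_map,
      Function.Embedding.coeFn_mk, finSeg]
    constructor
    · rintro ⟨h1, h2⟩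
      exact ⟨p.2, by simpa using h2, by ext <;> simp [Fin.ext_iff, h1]⟩
    · rintro ⟨y, hy, rfl⟩
      simp [hy]
  rw [this, Finset.card_map, card_finSeg h]

set_option maxHeartbeats 1000000 in
lemma edgesIn_rowSet {N : ℕ} (h0 : 0 < N) (G : SimpleGraph (Fin N)) (k : ℕ) :
    edgesIn (G.boxProd G) (rowSet N k) = edgesIn G (finSeg N k) := by
  rw [edgesIn, edgesIn]
  refine Finset.card_nbij' (Sym2.map Prod.snd)
    (Sym2.map (fun y : Fin N => ((⟨0, h0⟩ : Fin N), y))) ?_ ?_ ?_ ?_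
  · intro e he
    simp only [Finset.mem_coe, Finset.mem_filter, SimpleGraph.mem_edgeFinset, SimpleGraph.mem_edgeSet] at he ⊢
    obtain ⟨hadj, hmem⟩ := he
    induction e using Sym2.ind with
    | _ u v =>
      have hu := hmem u (Sym2.mem_mk_left u v)
      have hv := hmem v (Sym2.mem_mk_right u v)
      rw [mem_rowSet] at hu hv
      have h11 : u.1 = v.1 := Fin.ext (hu.1.trans hv.1.symm)
      rw [SimpleGraph.mem_edgeSet, SimpleGraph.boxProd_adj] at hadj
      have hadj2 : G.Adj u.2 v.2 := by
        rcases hadj with ⟨h1, -⟩ | ⟨h2, -⟩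
        · rw [h11] at h1
          exact absurd h1 (G.loopless.irrefl v.1)
        · exact h2
      rw [Sym2.map_pair_eq, SimpleGraph.mem_edgeSet]
      refine ⟨hadj2, ?_⟩
      intro w hw
      rw [Sym2.mem_iff] at hw
      rcases hw with rfl | rfl
      · simp [finSeg, hu.2]
      · simp [finSeg, hv.2]
  · intro e he
    simp only [Finset.mem_coe, Finset.mem_filter, SimpleGraph.mem_edgeFinset, SimpleGraph.mem_edgeSet] at he ⊢
    obtain ⟨hadj, hmem⟩ := he
    induction e using Sym2.ind with
    | _ a b =>
      have ha := hmem a (Sym2.mem_mk_left a b)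
      have hb := hmem b (Sym2.mem_mk_right a b)
      simp only [finSeg, Finset.mem_filter, Finset.mem_univ, true_and] at ha hb
      rw [Sym2.map_pair_eq]
      refine ⟨?_, ?_⟩
      · rw [SimpleGraph.mem_edgeSet, SimpleGraph.boxProd_adj]
        rw [SimpleGraph.mem_edgeSet] at hadj
        exact Or.inr ⟨hadj, rfl⟩
      · intro w hw
        rw [Sym2.mem_iff] at hw
        rcases hw with rfl | rfl
        · exact mem_rowSet.mpr ⟨rfl, ha⟩
        · exact mem_rowSet.mpr ⟨rfl, hb⟩
  · intro e he
    simp only [Finset.mem_coe, Finset.mem_filter] at he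
    obtain ⟨-, hmem⟩ := he
    induction e using Sym2.ind with
    | _ u v =>
      have hu := hmem u (Sym2.mem_mk_left u v)
      have hv := hmem v (Sym2.mem_mk_right u v)
      rw [mem_rowSet] at hu hv
      have hu' : (((⟨0, h0⟩ : Fin N), u.2) : Fin N × Fin N) = u := Prod.ext (Fin.ext hu.1.symm) rfl
      have hv' : (((⟨0, h0⟩ : Fin N), v.2) : Fin N × Fin N) = v := Prod.ext (Fin.ext hv.1.symm) rfl
      rw [Sym2.map_pair_eq, Sym2.map_pair_eq, hu', hv']
  · intro e he
    induction e using Sym2.ind with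
    | _ a b =>
      rw [Sym2.map_pair_eq, Sym2.map_pair_eq]




lemma edgesIn_hook_le {N : ℕ} (h0 : 0 < N) (h1N : 1 < N) (G : SimpleGraph (Fin N)) (n : ℕ) :
    edgesIn (G.boxProd G)
        (insert ((⟨1, h1N⟩ : Fin N), (⟨0, h0⟩ : Fin N)) (rowSet N n))
      ≤ edgesIn (G.boxProd G) (rowSet N n) + 1 := by
  have hkey : ∀ x : Fin N × Fin N,
      (G.boxProd G).Adj ((⟨1, h1N⟩ : Fin N), (⟨0, h0⟩ : Fin N)) x → x ∈ rowSet N n →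
      x = ((⟨0, h0⟩ : Fin N), (⟨0, h0⟩ : Fin N)) := by
    intro x hxy hx
    rw [mem_rowSet] at hx
    rw [SimpleGraph.boxProd_adj] at hxy
    rcases hxy with ⟨-, h2⟩ | ⟨-, h2⟩
    · exact Prod.ext (Fin.ext hx.1) h2.symm
    · exfalso
      have h3 : (1 : ℕ) = (x.1 : ℕ) := congrArg Fin.val h2
      have h4 := hx.1
      omega
  rw [edgesIn, edgesIn]
  refine le_trans (Finset.card_le_card ?_)
    (Finset.card_insert_le
      s((((⟨0, h0⟩ : Fin N), (⟨0, h0⟩ : Fin N)) : Fin N × Fin N),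
        (((⟨1, h1N⟩ : Fin N), (⟨0, h0⟩ : Fin N)) : Fin N × Fin N)) _)
  intro e he
  simp only [Finset.mem_filter] at he
  obtain ⟨he1, hmm⟩ := he
  induction e using Sym2.ind with
  | _ u v =>
    have hEF : (G.boxProd G).Adj u v := by
      have := SimpleGraph.mem_edgeFinset.mp he1
      rwa [SimpleGraph.mem_edgeSet] at this
    have hu := hmm u (Sym2.mem_mk_left u v)
    have hv := hmm v (Sym2.mem_mk_right u v)
    rcases Finset.mem_insert.mp hu with huq | hur
    · rcases Finset.mem_insert.mp hv with hvq | hvr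
      · exfalso
        rw [huq, hvq] at hEF
        exact (G.boxProd G).loopless.irrefl _ hEF
      · have hvz := hkey v (by rw [← huq]; exact hEF) hvr
        rw [Finset.mem_insert]
        left
        rw [huq, hvz]
        exact Sym2.eq_swap
    · rcases Finset.mem_insert.mp hv with hvq | hvr
      · have huz := hkey u (by rw [← hvq]; exact hEF.symm) hur
        rw [Finset.mem_insert]
        left
        rw [huz, hvq]
      · rw [Finset.mem_insert]
        right
        simp only [Finset.mem_filter]
        refine ⟨he1, ?_⟩
        intro w hw
        rw [Sym2.mem_iff] at hw
        rcases hw with rfl | rfl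
        · exact hur
        · exact hvr


lemma adj01 {N : ℕ} (hN : 2 ≤ N) (G : SimpleGraph (Fin N))
    (h : 1 ≤ edgesIn G (finSeg N 2)) :
    G.Adj ⟨0, by omega⟩ ⟨1, by omega⟩ := by
  rw [edgesIn] at h
  obtain ⟨e, he⟩ := Finset.card_pos.mp h
  simp only [Finset.mem_filter, SimpleGraph.mem_edgeFinset] at he
  obtain ⟨hadj, hmem⟩ := he
  induction e using Sym2.ind with
  | _ u v =>
    rw [SimpleGraph.mem_edgeSet] at hadj
    have hu := hmem u (Sym2.mem_mk_left u v)
    have hv := hmem v (Sym2.mem_mk_right u v)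
    simp only [finSeg, Finset.mem_filter, Finset.mem_univ, true_and] at hu hv
    have hne : (u : ℕ) ≠ (v : ℕ) := fun h' => G.ne_of_adj hadj (Fin.ext h')
    have hcases : (u : ℕ) = 0 ∧ (v : ℕ) = 1 ∨ (u : ℕ) = 1 ∧ (v : ℕ) = 0 := by omega
    rcases hcases with ⟨h1, h2⟩ | ⟨h1, h2⟩
    · have hu' : u = (⟨0, by omega⟩ : Fin N) := Fin.ext h1
      have hv' : v = (⟨1, by omega⟩ : Fin N) := Fin.ext h2
      rw [hu', hv'] at hadj
      exact hadj
    · have hu' : u = (⟨1, by omega⟩ : Fin N) := Fin.ext h1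
      have hv' : v = (⟨0, by omega⟩ : Fin N) := Fin.ext h2
      rw [hu', hv'] at hadj
      exact hadj.symm

/-- First-column lemma.  `G` is a `δ`-dense graph on
`{0, …, N-1}` whose identification is an optimal order, and
`A_1 ⊆ ⋯ ⊆ A_{N²}` is a chain of compressed subsets of `V × V` with
`|A_i| = i` and `I_{G²}(A_i) = I_{G²}(i)`.  If `A_2 = {(0,0), (0,1)}`, then
`A_N = {(0,0), (0,1), …, (0, N-1)}`. -/
theorem stmt_9 {N : ℕ} (hN : 2 ≤ N) (G : SimpleGraph (Fin N))
    (hdense : deltaDense G)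
    (hopt : ∀ k, k ≤ N → edgesIn G (finSeg N k) = maxEdgesIn G k)
    (A : ℕ → Finset (Fin N × Fin N))
    (hchain : ∀ i, 1 ≤ i → i < N * N → A i ⊆ A (i + 1))
    (hcompr : ∀ i, 1 ≤ i → i ≤ N * N → IsCompressed (A i))
    (hcard : ∀ i, 1 ≤ i → i ≤ N * N → (A i).card = i)
    (hopt2 : ∀ i, 1 ≤ i → i ≤ N * N →
      edgesIn (G.boxProd G) (A i) = maxEdgesIn (G.boxProd G) i)
    (hA2 : A 2 = {((⟨0, by omega⟩ : Fin N), (⟨0, by omega⟩ : Fin N)),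
                  ((⟨0, by omega⟩ : Fin N), (⟨1, by omega⟩ : Fin N))}) :
    A N = Finset.univ.filter (fun p : Fin N × Fin N => (p.1 : ℕ) = 0) := by
  classical
  have hN0 : 0 < N := by omega
  have h1N : 1 < N := by omega
  have hNN : N ≤ N * N := Nat.le_mul_of_pos_left N hN0
  have hcardV : Fintype.card (Fin N) = N := Fintype.card_fin N
  have hmono : ∀ m, m < N → maxEdgesIn G m ≤ maxEdgesIn G (m + 1) := by
    intro m hm
    exact maxEdgesIn_mono G (by rw [hcardV]; exact hm)
  have h1 : ∀ j, 2 ≤ j → j ≤ N → maxEdgesIn G (j - 1) + 1 ≤ maxEdgesIn G j := by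
    intro j h2 hjN
    by_contra hcon
    push_neg at hcon
    have hmo : maxEdgesIn G (j - 1) ≤ maxEdgesIn G j := by
      have := hmono (j - 1) (by omega)
      rwa [show j - 1 + 1 = j by omega] at this
    have hmo2 : maxEdgesIn G (j - 1 - 1) ≤ maxEdgesIn G (j - 1) := by
      have := hmono (j - 1 - 1) (by omega)
      rwa [show j - 1 - 1 + 1 = j - 1 by omega] at this
    have hd := hdense j h2 (by rwa [hcardV]) (by simp only [deltaSeq]; omega)
    simp only [deltaSeq] at hd
    omega
  have hM1 : maxEdgesIn G 1 = 0 := maxEdgesIn_one G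
  have hM2 : maxEdgesIn G 2 = 1 := by
    have ha := maxEdgesIn_two_le G
    have hb := h1 2 le_rfl hN
    omega
  have hge2 : ∀ j, 3 ≤ j → j ≤ N → maxEdgesIn G (j - 1) + 2 ≤ maxEdgesIn G j := by
    intro j h3 hjN
    by_contra hcon
    push_neg at hcon
    have ha := h1 j (by omega) hjN
    have hb := h1 (j - 1) (by omega) (by omega)
    have hd := hdense j (by omega) (by rwa [hcardV]) (by simp only [deltaSeq]; omega)
    simp only [deltaSeq] at hd
    omega
  have hadj : G.Adj ⟨0, by omega⟩ ⟨1, by omega⟩ := by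
    apply adj01 hN G
    rw [hopt 2 hN, hM2]
  have key : ∀ i, 2 ≤ i → i ≤ N → A i = rowSet N i := by
    intro i
    induction i with
    | zero => intro h _; omega
    | succ n ih =>
      intro h2 hiN
      rcases Nat.lt_or_ge n 2 with hn | hn
      · have hn1 : n = 1 := by omega
        subst hn1
        rw [hA2]
        ext p
        simp only [rowSet, Finset.mem_filter, Finset.mem_univ, true_and, Finset.mem_insert,
          Finset.mem_singleton, Prod.ext_iff, Fin.ext_iff]
        omega
      · have hAn := ih hn (by omega)
        have hnlt : n < N * N := by omega
        have hsub := hchain n (by omega) hnlt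
        have hcn := hcard n (by omega) (by omega)
        have hcn1 := hcard (n + 1) (by omega) (by omega)
        have hex : ∃ c ∈ A (n + 1), c ∉ A n := by
          by_contra hcon
          push_neg at hcon
          have := Finset.card_le_card hcon
          omega
        obtain ⟨c, hcmem, hcnot⟩ := hex
        have hAn1 : A (n + 1) = insert c (A n) := by
          refine (Finset.eq_of_subset_of_card_le ?_ ?_).symm
          · intro x hx
            rw [Finset.mem_insert] at hx
            rcases hx with rfl | hx
            · exact hcmem
            · exact hsub hx
          · rw [hcn1, Finset.card_insert_of_notMem hcnot, hcn]
        obtain ⟨hrowc, hcolc⟩ := hcompr (n + 1) (by omega) (by omega)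
        obtain ⟨a, b⟩ := c
        by_cases ha0 : (a : ℕ) = 0
        · have hnN : n < N := by omega
          have hbn : ¬ ((b : ℕ) < n) := fun hb =>
            hcnot (hAn ▸ mem_rowSet.mpr ⟨ha0, hb⟩)
          have hmem' : (a, (⟨n, hnN⟩ : Fin N)) ∈ A (n + 1) :=
            hrowc a b ⟨n, hnN⟩ hcmem (by simp only [Fin.le_def]; omega)
          have hne' : (a, (⟨n, hnN⟩ : Fin N)) ∉ A n := by
            rw [hAn]
            intro hmm
            have := (mem_rowSet.mp hmm).2
            simp at this
          have heq : (a, (⟨n, hnN⟩ : Fin N)) = (a, b) := by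
            rcases Finset.mem_insert.mp (hAn1 ▸ hmem') with h | h
            · exact h
            · exact absurd h hne'
          have hb : b = ⟨n, hnN⟩ := (Prod.mk.injEq _ _ _ _ ▸ heq).2.symm
          subst hb
          rw [hAn1, hAn]
          ext p
          simp only [Finset.mem_insert, mem_rowSet, Prod.ext_iff, Fin.ext_iff]
          omega
        · exfalso
          have hmem1 : ((⟨1, h1N⟩ : Fin N), b) ∈ A (n + 1) :=
            hcolc b a ⟨1, h1N⟩ hcmem (by simp only [Fin.le_def]; omega)
          have hne1 : ((⟨1, h1N⟩ : Fin N), b) ∉ A n := by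
            rw [hAn]
            intro hmm
            have := (mem_rowSet.mp hmm).1
            simp at this
          have hc1 : ((⟨1, h1N⟩ : Fin N), b) = (a, b) := by
            rcases Finset.mem_insert.mp (hAn1 ▸ hmem1) with h | h
            · exact h
            · exact absurd h hne1
          have hmem0 : ((⟨1, h1N⟩ : Fin N), (⟨0, hN0⟩ : Fin N)) ∈ A (n + 1) :=
            hrowc ⟨1, h1N⟩ b ⟨0, hN0⟩ hmem1 (by simp only [Fin.le_def]; omega)
          have hne0 : ((⟨1, h1N⟩ : Fin N), (⟨0, hN0⟩ : Fin N)) ∉ A n := by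
            rw [hAn]
            intro hmm
            have := (mem_rowSet.mp hmm).1
            simp at this
          have hc0 : ((⟨1, h1N⟩ : Fin N), (⟨0, hN0⟩ : Fin N)) = (a, b) := by
            rcases Finset.mem_insert.mp (hAn1 ▸ hmem0) with h | h
            · exact h
            · exact absurd h hne0
          -- the bad set
          have hset : A (n + 1)
              = insert ((⟨1, h1N⟩ : Fin N), (⟨0, hN0⟩ : Fin N)) (rowSet N n) := by
            rw [hAn1, hAn, ← hc0]
          -- upper bound on edges
          have hup : edgesIn (G.boxProd G) (A (n + 1)) ≤ maxEdgesIn G n + 1 := by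
            rw [hset]
            refine le_trans (edgesIn_hook_le hN0 h1N G n) ?_
            rw [edgesIn_rowSet hN0 G n, hopt n (by omega)]
          -- lower bound
          have hlow : maxEdgesIn G (n + 1) ≤ edgesIn (G.boxProd G) (A (n + 1)) := by
            have hcr : (rowSet N (n + 1)).card = n + 1 := card_rowSet hN0 hiN
            have hle := le_maxEdgesIn (G.boxProd G) (rowSet N (n + 1))
            rw [hcr, edgesIn_rowSet hN0 G (n + 1), hopt (n + 1) hiN] at hle
            rw [hopt2 (n + 1) (by omega) (by omega)]
            exact hle
          have hg := hge2 (n + 1) (by omega) hiN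
          have hn1 : n + 1 - 1 = n := rfl
          rw [hn1] at hg
          omega
  have hfin := key N hN le_rfl
  rw [hfin]
  ext p
  simp only [mem_rowSet, Finset.mem_filter, Finset.mem_univ, true_and]
  exact ⟨fun h => h.1, fun h => ⟨h, p.2.isLt⟩⟩
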